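/- Let G = (V, E) be a finite DAG, let c ≥ 0 be a real number, and let f : V → ℝ be a c-admissible weighting function. Let v₁ ≠ v₂ be two vertices with identical in-neighborhoods: for every u ∈ V, (u, v₁) ∈ E if and only if (u, v₂) ∈ E. Define the merged graph G' on V' := V \ {v₂} with edge relation E' given, for a, b ∈ V', by: (a, b) ∈ E' iff (a, b) ∈ E or (a = v₁ and (v₂, b) ∈ E). Define f' : V' → ℝ by f'(v₁) := f(v₁) + f(v₂) and f'(v) := f(v) for v ≠ v₁. Then G' is a DAG (E' has no directed cycles and is irreflexive), f' is a c-admissible weighting function for G', and Σ_{v ∈ V'} f'(v) = Σ_{v ∈ V} f(v). -/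
import Mathlib
open scoped Classical

lemma merge_sub_sum {V : Type*} [Fintype V] (v₂ : V) (p : V → Prop) (g : V → ℝ) :
    ∑ w ∈ Finset.univ.filter (fun w : {v : V // v ≠ v₂} => p w.1), g w.1
      = ∑ w ∈ Finset.univ.filter (fun w : V => w ≠ v₂ ∧ p w), g w := by
  rw [Finset.sum_filter, Finset.sum_filter]
  rw [← Finset.sum_subtype (Finset.univ.filter (fun v : V => v ≠ v₂))
    (by simp) (fun w => if p w then g w else 0)]
  rw [Finset.sum_filter]
  simp [ite_and]

lemma merge_filter_sum {V : Type*} [Fintype V] (v₁ v₂ : V) (hne : v₁ ≠ v₂)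
    (f : V → ℝ) (p : V → Prop) (hp : p v₁ ↔ p v₂) :
    ∑ w ∈ Finset.univ.filter (fun w : V => w ≠ v₂ ∧ p w),
        (if w = v₁ then f v₁ + f v₂ else f w)
      = ∑ w ∈ Finset.univ.filter (fun w : V => p w), f w := by
  have hs : Finset.univ.filter (fun w : V => w ≠ v₂ ∧ p w)
      = (Finset.univ.filter (fun w : V => p w)).erase v₂ := by
    ext w; simp [Finset.mem_erase, and_comm]
  have hg : ∀ w : V, (if w = v₁ then f v₁ + f v₂ else f w)
      = f w + (if w = v₁ then f v₂ else 0) := by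
    intro w; by_cases h : w = v₁ <;> simp [h]
  rw [hs]
  simp only [hg]
  rw [Finset.sum_add_distrib, Finset.sum_ite_eq']
  by_cases h1 : p v₁
  · have h2 : p v₂ := hp.mp h1
    rw [if_pos (by simp [h1, hne])]
    rw [← Finset.sum_erase_add _ _ (by simp [h2] : v₂ ∈ Finset.univ.filter (fun w : V => p w))]
  · have h2 : ¬ p v₂ := fun h => h1 (hp.mpr h)
    rw [if_neg (by simp [h1])]
    rw [Finset.erase_eq_of_notMem (by simp [h2])]
    ring

theorem stmt5 {V : Type*} [Fintype V] (E : V → V → Prop)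
    (hacyc : ∀ v : V, ¬ Relation.TransGen E v v)
    (c : ℝ) (hc : 0 ≤ c) (f : V → ℝ)
    (hf : ∀ v : V, f v ≥ 1 + c * ∑ w ∈ Finset.univ.filter (fun w => E v w), f w)
    (v₁ v₂ : V) (hne : v₁ ≠ v₂)
    (hin : ∀ u : V, E u v₁ ↔ E u v₂) :
    (∀ a : {v : V // v ≠ v₂},
      ¬ Relation.TransGen
          (fun a b : {v : V // v ≠ v₂} => E a.1 b.1 ∨ (a.1 = v₁ ∧ E v₂ b.1)) a a) ∧
    (∀ v : {v : V // v ≠ v₂},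
      (if v.1 = v₁ then f v₁ + f v₂ else f v.1)
        ≥ 1 + c * ∑ w ∈ Finset.univ.filter
            (fun w : {v : V // v ≠ v₂} => E v.1 w.1 ∨ (v.1 = v₁ ∧ E v₂ w.1)),
            (if w.1 = v₁ then f v₁ + f v₂ else f w.1)) ∧
    (∑ v : {v : V // v ≠ v₂}, (if v.1 = v₁ then f v₁ + f v₂ else f v.1)
      = ∑ v : V, f v) := by
  classical
  have hirr : ∀ v : V, ¬ E v v := fun v h => hacyc v (Relation.TransGen.single h)
  have hE12 : ¬ E v₁ v₂ := fun h => hirr v₁ ((hin v₁).mpr h)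
  have hE21 : ¬ E v₂ v₁ := fun h => hirr v₂ ((hin v₂).mp h)
  -- f ≥ 1 everywhere
  have hwfT : WellFounded (fun a b : V => Relation.TransGen E b a) := by
    have h1 : IsTrans V (fun a b : V => Relation.TransGen E b a) :=
      ⟨fun a b c h1 h2 => h2.trans h1⟩
    have h2 : IsIrrefl V (fun a b : V => Relation.TransGen E b a) := ⟨hacyc⟩
    exact Finite.wellFounded_of_trans_of_irrefl _
  have hwf : WellFounded (fun a b : V => E b a) :=
    Subrelation.wf (fun h => Relation.TransGen.single h) hwfT
  have hf1 : ∀ v : V, 1 ≤ f v := by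
    intro v
    induction v using hwf.induction with
    | _ v ih =>
      have hnn : 0 ≤ ∑ w ∈ Finset.univ.filter (fun w => E v w), f w :=
        Finset.sum_nonneg fun w hw =>
          le_trans zero_le_one (ih w (by simpa using (Finset.mem_filter.mp hw).2))
      nlinarith [hf v, mul_nonneg hc hnn]
  -- path translation
  have swap : ∀ a : V, Relation.TransGen E a v₁ → Relation.TransGen E a v₂ := by
    intro a h
    obtain ⟨u, hau, hu⟩ := Relation.TransGen.tail'_iff.mp h
    exact Relation.TransGen.tail' hau ((hin u).mp hu)
  have key : ∀ a b : {v : V // v ≠ v₂},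
      Relation.TransGen
        (fun a b : {v : V // v ≠ v₂} => E a.1 b.1 ∨ (a.1 = v₁ ∧ E v₂ b.1)) a b →
      Relation.TransGen E a.1 b.1 ∨ (a.1 = v₁ ∧ Relation.TransGen E v₂ b.1) := by
    intro a b h
    induction h with
    | single h =>
      rcases h with h | ⟨ha, h⟩
      · exact Or.inl (Relation.TransGen.single h)
      · exact Or.inr ⟨ha, Relation.TransGen.single h⟩
    | tail hab hbc ih =>
      rcases hbc with h | ⟨hb, h⟩
      · rcases ih with h1 | ⟨ha, h2⟩
        · exact Or.inl (h1.tail h)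
        · exact Or.inr ⟨ha, h2.tail h⟩
      · rcases ih with h1 | ⟨ha, h2⟩
        · rw [hb] at h1
          exact Or.inl ((swap _ h1).tail h)
        · rw [hb] at h2
          exact absurd (swap v₂ h2) (hacyc v₂)
  refine ⟨?_, ?_, ?_⟩
  · intro a h
    rcases key a a h with h1 | ⟨ha, h2⟩
    · exact hacyc a.1 h1
    · rw [ha] at h2
      exact hacyc v₂ (swap v₂ h2)
  · intro v
    by_cases hv : v.1 = v₁
    · rw [if_pos hv]
      have hfilter : (Finset.univ.filter
          (fun w : {v : V // v ≠ v₂} => E v.1 w.1 ∨ (v.1 = v₁ ∧ E v₂ w.1)))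
          = Finset.univ.filter (fun w : {v : V // v ≠ v₂} => E v₁ w.1 ∨ E v₂ w.1) := by
        ext w; simp [hv]
      have h1 : (∑ w ∈ Finset.univ.filter
            (fun w : {v : V // v ≠ v₂} => E v₁ w.1 ∨ E v₂ w.1),
            (if w.1 = v₁ then f v₁ + f v₂ else f w.1))
          = ∑ w ∈ Finset.univ.filter (fun w : V => w ≠ v₂ ∧ (E v₁ w ∨ E v₂ w)),
            (if w = v₁ then f v₁ + f v₂ else f w) := by
        convert merge_sub_sum v₂ (fun w => E v₁ w ∨ E v₂ w)
          (fun w => if w = v₁ then f v₁ + f v₂ else f w) using 2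
        all_goals { ext w; simp }
      have h2 : (∑ w ∈ Finset.univ.filter (fun w : V => w ≠ v₂ ∧ (E v₁ w ∨ E v₂ w)),
            (if w = v₁ then f v₁ + f v₂ else f w))
          = ∑ w ∈ Finset.univ.filter (fun w : V => E v₁ w ∨ E v₂ w), f w := by
        convert merge_filter_sum v₁ v₂ hne f (fun w => E v₁ w ∨ E v₂ w)
          (by simp [hirr v₁, hirr v₂, hE12, hE21]) using 2
        all_goals { ext w; simp }
      rw [hfilter, h1, h2]
      have hsub : ∑ w ∈ Finset.univ.filter (fun w : V => E v₁ w ∨ E v₂ w), f w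
          ≤ (∑ w ∈ Finset.univ.filter (fun w => E v₁ w), f w)
            + ∑ w ∈ Finset.univ.filter (fun w => E v₂ w), f w := by
        rw [Finset.filter_or]
        have h1 := Finset.sum_union_inter (s₁ := Finset.univ.filter (fun w => E v₁ w))
          (s₂ := Finset.univ.filter (fun w => E v₂ w)) (f := f)
        have h2 : (0:ℝ) ≤ ∑ w ∈ (Finset.univ.filter (fun w => E v₁ w) ∩
            Finset.univ.filter (fun w => E v₂ w)), f w :=
          Finset.sum_nonneg fun w _ => le_trans zero_le_one (hf1 w)
        linarith
      nlinarith [hf v₁, hf v₂]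
    · rw [if_neg hv]
      have hfilter : (Finset.univ.filter
          (fun w : {v : V // v ≠ v₂} => E v.1 w.1 ∨ (v.1 = v₁ ∧ E v₂ w.1)))
          = Finset.univ.filter (fun w : {v : V // v ≠ v₂} => E v.1 w.1) := by
        ext w; simp [hv]
      have h1 : (∑ w ∈ Finset.univ.filter
            (fun w : {v : V // v ≠ v₂} => E v.1 w.1),
            (if w.1 = v₁ then f v₁ + f v₂ else f w.1))
          = ∑ w ∈ Finset.univ.filter (fun w : V => w ≠ v₂ ∧ E v.1 w),
            (if w = v₁ then f v₁ + f v₂ else f w) := by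
        convert merge_sub_sum v₂ (fun w => E v.1 w)
          (fun w => if w = v₁ then f v₁ + f v₂ else f w) using 2
      have h2 : (∑ w ∈ Finset.univ.filter (fun w : V => w ≠ v₂ ∧ E v.1 w),
            (if w = v₁ then f v₁ + f v₂ else f w))
          = ∑ w ∈ Finset.univ.filter (fun w : V => E v.1 w), f w := by
        convert merge_filter_sum v₁ v₂ hne f (fun w => E v.1 w) (hin v.1) using 2
      rw [hfilter, h1, h2]
      exact hf v.1
  · have h1 : (∑ w ∈ Finset.univ.filter (fun _ : {v : V // v ≠ v₂} => True),
          (if w.1 = v₁ then f v₁ + f v₂ else f w.1))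
        = ∑ w ∈ Finset.univ.filter (fun w : V => w ≠ v₂ ∧ True),
          (if w = v₁ then f v₁ + f v₂ else f w) := by
      convert merge_sub_sum v₂ (fun _ : V => True)
        (fun w => if w = v₁ then f v₁ + f v₂ else f w) using 2
      all_goals { ext w; simp }
    have h2 : (∑ w ∈ Finset.univ.filter (fun w : V => w ≠ v₂ ∧ True),
          (if w = v₁ then f v₁ + f v₂ else f w))
        = ∑ w ∈ Finset.univ.filter (fun _ : V => True), f w := by
      convert merge_filter_sum v₁ v₂ hne f (fun _ : V => True) Iff.rfl using 2
      all_goals { ext w; simp }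
    rw [show (Finset.univ : Finset {v : V // v ≠ v₂})
        = Finset.univ.filter (fun _ : {v : V // v ≠ v₂} => True) by simp]
    rw [h1, h2]
    simp
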